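/- If the matrix A has rank one, i.e. (a_1 d_0 + b_0 b_1)(a_0 d_1 + c_0 c_1) = (a_0 b_1 + a_1 c_0)(b_0 d_1 + c_1 d_0), then for all n ≥ 1 one has u_{2n+1} = (b_0 + K a_0)·M^{n-1}·u_2 and v_{2n+1} = (d_0 + K c_0)·M^{n-1}·u_2, where K = (b_0 d_1 + c_1 d_0)/(a_1 d_0 + b_0 b_1) and M = a_1 d_0 + b_0 b_1 + K·(a_0 b_1 + a_1 c_0). -/

import Mathlib

open Finset Filter Topology

theorem stmt_5
    (x y a b c d : ℕ → ℝ)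
    (hx0 : 0 < x 0) (hy0 : 0 < y 0)
    (hapos : ∀ n, 0 < a n) (hbpos : ∀ n, 0 < b n)
    (hcpos : ∀ n, 0 < c n) (hdpos : ∀ n, 0 < d n)
    (haper : ∀ n, a (n + 2) = a n) (hbper : ∀ n, b (n + 2) = b n)
    (hcper : ∀ n, c (n + 2) = c n) (hdper : ∀ n, d (n + 2) = d n)
    (hxrec : ∀ n, x (n + 1) = a n / x n + b n / y n)
    (hyrec : ∀ n, y (n + 1) = c n / x n + d n / y n)
    (u v : ℕ → ℝ)
    (hu : ∀ n, u n = (∏ k ∈ Finset.range (n + 1), x k) * ∏ k ∈ Finset.range n, y k)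
    (hv : ∀ n, v n = (∏ k ∈ Finset.range n, x k) * ∏ k ∈ Finset.range (n + 1), y k)
    (hrank : (a 1 * d 0 + b 0 * b 1) * (a 0 * d 1 + c 0 * c 1) =
      (a 0 * b 1 + a 1 * c 0) * (b 0 * d 1 + c 1 * d 0))
    (K : ℝ) (hK : K = (b 0 * d 1 + c 1 * d 0) / (a 1 * d 0 + b 0 * b 1))
    (M : ℝ) (hM : M = a 1 * d 0 + b 0 * b 1 + K * (a 0 * b 1 + a 1 * c 0))
    : ∀ n : ℕ, 1 ≤ n →
      u (2 * n + 1) = (b 0 + K * a 0) * M ^ (n - 1) * u 2 ∧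
      v (2 * n + 1) = (d 0 + K * c 0) * M ^ (n - 1) * u 2 := by
  have hdenom : a 1 * d 0 + b 0 * b 1 ≠ 0 := by
    have := hapos 1; have := hdpos 0; have := hbpos 0; have := hbpos 1; positivity
  have hpos : ∀ n, 0 < x n ∧ 0 < y n := by
    intro n
    induction n with
    | zero => exact ⟨hx0, hy0⟩
    | succ k ih =>
      refine ⟨?_, ?_⟩
      · rw [hxrec]
        exact add_pos (div_pos (hapos k) ih.1) (div_pos (hbpos k) ih.2)
      · rw [hyrec]
        exact add_pos (div_pos (hcpos k) ih.1) (div_pos (hdpos k) ih.2)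
  have hstep_u : ∀ n, u (n + 1) = b n * u n + a n * v n := by
    intro n
    have hxn := (hpos n).1.ne'
    have hyn := (hpos n).2.ne'
    simp only [hu, hv, Finset.prod_range_succ]
    rw [hxrec n]
    field_simp
    ring
  have hstep_v : ∀ n, v (n + 1) = d n * u n + c n * v n := by
    intro n
    have hxn := (hpos n).1.ne'
    have hyn := (hpos n).2.ne'
    simp only [hu, hv, Finset.prod_range_succ]
    rw [hyrec n]
    field_simp
    ring
  have pe : ∀ (f : ℕ → ℝ), (∀ n, f (n + 2) = f n) → ∀ n, f (2 * n) = f 0 ∧ f (2 * n + 1) = f 1 := by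
    intro f hf n
    induction n with
    | zero => simp
    | succ k ih =>
      have h1 : 2 * (k + 1) = 2 * k + 2 := by ring
      have h2 : 2 * k + 2 + 1 = 2 * k + 1 + 2 := by ring
      rw [h1, h2, hf, hf]
      exact ih
  have hK1 : K * (a 1 * d 0 + b 0 * b 1) = b 0 * d 1 + c 1 * d 0 := by
    rw [hK]; rw [div_mul_cancel₀ _ hdenom]
  have hK2 : a 0 * d 1 + c 0 * c 1 = K * (a 0 * b 1 + a 1 * c 0) := by
    rw [hK, div_mul_eq_mul_div, eq_div_iff hdenom]; linear_combination hrank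
  have hu2step : ∀ m, u (2 * m + 2) =
      (a 1 * d 0 + b 0 * b 1) * u (2 * m) + (a 0 * b 1 + a 1 * c 0) * v (2 * m) := by
    intro m
    have e : 2 * m + 2 = (2 * m + 1) + 1 := rfl
    rw [e, hstep_u, hstep_u, hstep_v, (pe a haper m).1, (pe a haper m).2,
      (pe b hbper m).1, (pe b hbper m).2, (pe c hcper m).1, (pe d hdper m).1]
    ring
  have hv2step : ∀ m, v (2 * m + 2) =
      (b 0 * d 1 + c 1 * d 0) * u (2 * m) + (a 0 * d 1 + c 0 * c 1) * v (2 * m) := by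
    intro m
    have e : 2 * m + 2 = (2 * m + 1) + 1 := rfl
    rw [e, hstep_v, hstep_u, hstep_v, (pe a haper m).1, (pe b hbper m).1,
      (pe c hcper m).1, (pe c hcper m).2, (pe d hdper m).1, (pe d hdper m).2]
    ring
  have hKv : ∀ m, v (2 * m + 2) = K * u (2 * m + 2) := by
    intro m
    rw [hv2step, hu2step]
    linear_combination u (2 * m) * hK1.symm + v (2 * m) * hK2
  have hU : ∀ m, u (2 * m + 2) = M ^ m * u 2 := by
    intro m
    induction m with
    | zero => simp
    | succ k ih =>
      have e : 2 * (k + 1) + 2 = 2 * (k + 1) + 2 := rfl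
      have e2 : 2 * (k + 1) = 2 * k + 2 := by ring
      have h := hu2step (k + 1)
      rw [e2] at h ⊢
      rw [h, hKv, ih, hM]
      ring
  intro n hn
  obtain ⟨m, rfl⟩ : ∃ m, n = m + 1 := ⟨n - 1, (Nat.succ_pred_eq_of_pos hn).symm⟩
  have e : 2 * (m + 1) + 1 = (2 * m + 2) + 1 := by ring
  have hb := (pe b hbper (m + 1)).1
  have ha := (pe a haper (m + 1)).1
  have hd := (pe d hdper (m + 1)).1
  have hc := (pe c hcper (m + 1)).1
  have e2 : 2 * (m + 1) = 2 * m + 2 := by ring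
  rw [e2] at hb ha hd hc
  constructor
  · rw [e, hstep_u, hb, ha, hKv, hU]
    simp only [Nat.add_sub_cancel]
    ring
  · rw [e, hstep_v, hd, hc, hKv, hU]
    simp only [Nat.add_sub_cancel]
    ring
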